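/- There exists a constant C > 0 such that for every integer i ≥ 1 and every real A ≥ 8: if Z is a random variable with law GG(2i−1, 2), then P(Z ≥ A^{1/3}·√i) ≤ C · exp(−A^{2/3}). -/

import Mathlib

open MeasureTheory ProbabilityTheory Real Filter

/-- Density of the Beta distribution `β(u,v)` with respect to Lebesgue measure. -/
noncomputable def betaPDFReal (u v x : ℝ) : ℝ :=
  if 0 < x ∧ x < 1 then
    Real.Gamma (u + v) / (Real.Gamma u * Real.Gamma v) * x ^ (u - 1) * (1 - x) ^ (v - 1)
  else 0

/-- The Beta distribution `β(u,v)` on `ℝ`. -/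
noncomputable def betaMeasure (u v : ℝ) : Measure ℝ :=
  volume.withDensity fun x => ENNReal.ofReal (_root_.betaPDFReal u v x)

/-- Density of the generalized Gamma distribution `GG(u,v)` w.r.t. Lebesgue measure. -/
noncomputable def genGammaPDFReal (u v x : ℝ) : ℝ :=
  if 0 < x then v / Real.Gamma (u / v) * x ^ (u - 1) * Real.exp (-(x ^ v)) else 0

/-- The generalized Gamma distribution `GG(u,v)` on `ℝ`. -/
noncomputable def genGammaMeasure (u v : ℝ) : Measure ℝ :=
  volume.withDensity fun x => ENNReal.ofReal (genGammaPDFReal u v x)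

/-- There is `C > 0` such that for every `i ≥ 1`, `A ≥ 8` and `Z ~ GG(2i-1, 2)`,
`P(Z ≥ A^(1/3) √i) ≤ C * exp(-A^(2/3))`. -/

-- exact tail integral
lemma gg_int (t : ℝ) (ht : 0 < t) :
    (∫ x in Set.Ioi t, x * Real.exp (-(x^2/2))) = Real.exp (-(t^2/2)) ∧
    IntegrableOn (fun x => x * Real.exp (-(x^2/2))) (Set.Ioi t) := by
  have hderiv : ∀ x ∈ Set.Ici t, HasDerivAt (fun y : ℝ => -Real.exp (-(y^2/2)))
      (x * Real.exp (-(x^2/2))) x := by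
    intro x _
    have h1 : HasDerivAt (fun y : ℝ => -(y^2/2)) (-x) x := by
      have := ((hasDerivAt_pow 2 x).div_const 2).neg
      exact this.congr_deriv (by ring)
    have h2 := (h1.exp).neg
    exact h2.congr_deriv (by ring)
  have hpos : ∀ x ∈ Set.Ioi t, 0 ≤ x * Real.exp (-(x^2/2)) := fun x hx =>
    mul_nonneg (le_of_lt (lt_trans ht hx)) (Real.exp_pos _).le
  have htend : Tendsto (fun y : ℝ => -Real.exp (-(y^2/2))) atTop (nhds 0) := by
    have h1 : Tendsto (fun y : ℝ => -(y^2/2)) atTop atBot := by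
      apply tendsto_neg_atBot_iff.mpr
      exact (tendsto_pow_atTop (by norm_num)).atTop_div_const (by norm_num)
    have := (Real.tendsto_exp_atBot.comp h1).neg
    simpa using this
  constructor
  · have := integral_Ioi_of_hasDerivAt_of_nonneg' hderiv hpos htend
    simpa using this
  · exact integrableOn_Ioi_deriv_of_nonneg' hderiv hpos htend

-- pointwise bound
lemma gg_ptwise (i : ℕ) (t x : ℝ) (ht : 0 < t) (ht2 : 2*(i:ℝ) ≤ t^2) (hx : t ≤ x) :
    x ^ (2*(i:ℝ)-2) * Real.exp (-(x^2)) ≤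
      (t ^ (2*(i:ℝ)-3) * Real.exp (-(t^2/2))) * (x * Real.exp (-(x^2/2))) := by
  have hx0 : 0 < x := lt_of_lt_of_le ht hx
  set c : ℝ := 2*(i:ℝ)-3 with hc
  -- key : (x/t)^c ≤ exp ((x^2-t^2)/2)
  have hxt1 : (1:ℝ) ≤ x/t := (one_le_div ht).mpr hx
  have hx2t2 : t^2 ≤ x^2 := by nlinarith
  have key : (x/t) ^ c ≤ Real.exp ((x^2-t^2)/2) := by
    rcases le_or_gt c 0 with h | h
    · calc (x/t) ^ c ≤ 1 := Real.rpow_le_one_of_one_le_of_nonpos hxt1 h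
        _ ≤ _ := Real.one_le_exp (by nlinarith)
    · rw [← Real.exp_log (x := (x/t)^c) (Real.rpow_pos_of_pos (by positivity) _),
        Real.log_rpow (by positivity)]
      apply Real.exp_le_exp.mpr
      have hlog : Real.log (x/t) ≤ (x-t)/t := by
        have := Real.log_le_sub_one_of_pos (x := x/t) (by positivity)
        calc Real.log (x/t) ≤ x/t - 1 := this
          _ = (x-t)/t := by field_simp
      calc c * Real.log (x/t) ≤ c * ((x-t)/t) := by
            exact mul_le_mul_of_nonneg_left hlog h.le
        _ ≤ (x^2-t^2)/2 := by
            rw [mul_div_assoc', div_le_div_iff₀ ht (by norm_num)]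
            have h1 : c ≤ t^2 := by rw [hc]; nlinarith
            nlinarith [mul_nonneg (sub_nonneg.mpr hx) (sub_nonneg.mpr hx2t2)]
  -- x^c ≤ t^c * exp((x²-t²)/2)
  have hxc : x ^ c ≤ t ^ c * Real.exp ((x^2-t^2)/2) := by
    have : x ^ c = t ^ c * (x/t) ^ c := by
      rw [← Real.mul_rpow ht.le (by positivity)]
      congr 1; field_simp
    rw [this]
    exact mul_le_mul_of_nonneg_left key (Real.rpow_pos_of_pos ht _).le
  have hsplit : x ^ (2*(i:ℝ)-2) = x * x ^ c := by
    rw [hc, show 2*(i:ℝ)-2 = (2*(i:ℝ)-3) + 1 by ring, Real.rpow_add_one hx0.ne']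
    ring
  rw [hsplit]
  have hexp : Real.exp (-(x^2)) = Real.exp (-(x^2/2)) * Real.exp (-(x^2/2)) := by
    rw [← Real.exp_add]; ring_nf
  rw [hexp]
  calc x * x ^ c * (Real.exp (-(x^2/2)) * Real.exp (-(x^2/2)))
      ≤ x * (t ^ c * Real.exp ((x^2-t^2)/2)) * (Real.exp (-(x^2/2)) * Real.exp (-(x^2/2))) := by
        apply mul_le_mul_of_nonneg_right (mul_le_mul_of_nonneg_left hxc hx0.le) (by positivity)
    _ = (t ^ c * Real.exp (-(t^2/2))) * (x * Real.exp (-(x^2/2))) := by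
        rw [show (x^2-t^2)/2 = x^2/2 + -(t^2/2) by ring, Real.exp_add, Real.exp_neg (x^2/2)]
        field_simp

lemma gg_exp3 : (16:ℝ) ≤ Real.exp 3 := by
  have h := Real.exp_one_gt_d9
  have h3 : Real.exp 3 = Real.exp 1 * Real.exp 1 * Real.exp 1 := by
    rw [← Real.exp_add, ← Real.exp_add]; norm_num
  rw [h3]; nlinarith

lemma gg_ind : ∀ i : ℕ, 1 ≤ i →
    2 * (4*(i:ℝ)) ^ ((i:ℝ) - 3/2) * Real.exp (-(4*((i:ℝ)-1))) ≤ Real.Gamma ((i:ℝ) - 1/2) := by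
  intro i hi
  induction i, hi using Nat.le_induction with
  | base =>
    have h4 : (4:ℝ) ^ (-((1:ℝ)/2)) = 1/2 := by
      rw [show (4:ℝ) = 2^(2:ℕ) by norm_num, ← Real.rpow_natCast 2 2, ← Real.rpow_mul (by norm_num)]
      norm_num
    norm_num
    rw [Real.Gamma_one_half_eq]
    have : (1:ℝ) ≤ Real.sqrt Real.pi := by
      rw [show (1:ℝ) = Real.sqrt 1 by simp]
      exact Real.sqrt_le_sqrt (by linarith [Real.pi_gt_three])
    linarith
  | succ i hi ih =>
    have hi1 : (1:ℝ) ≤ (i:ℝ) := by exact_mod_cast hi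
    have hipos : (0:ℝ) < (i:ℝ) := by linarith
    have hGamma : Real.Gamma ((i:ℝ)+1 - 1/2) = ((i:ℝ) - 1/2) * Real.Gamma ((i:ℝ) - 1/2) := by
      rw [show ((i:ℝ)+1 - 1/2) = ((i:ℝ) - 1/2) + 1 by ring, Real.Gamma_add_one (by linarith)]
    push_cast
    rw [hGamma]
    -- Q := (4*(i+1))^(i+1-3/2) = (4i)^(i-3/2) * ((i+1)/i)^(i-3/2) * (4*(i+1))
    have hbase1 : (1:ℝ) ≤ ((i:ℝ)+1)/(i:ℝ) := by
      rw [le_div_iff₀ hipos]; linarith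
    have hQ : (4*((i:ℝ)+1)) ^ ((i:ℝ)+1 - 3/2)
        = (4*(i:ℝ)) ^ ((i:ℝ) - 3/2) * (((i:ℝ)+1)/(i:ℝ)) ^ ((i:ℝ) - 3/2) * (4*((i:ℝ)+1)) := by
      rw [show ((i:ℝ)+1 - 3/2) = ((i:ℝ) - 3/2) + 1 by ring,
        Real.rpow_add_one (by positivity),
        show (4*((i:ℝ)+1)) = (4*(i:ℝ)) * (((i:ℝ)+1)/(i:ℝ)) by field_simp,
        Real.mul_rpow (by positivity) (by positivity)]
    have hratio : (((i:ℝ)+1)/(i:ℝ)) ^ ((i:ℝ) - 3/2) ≤ Real.exp 1 := by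
      calc (((i:ℝ)+1)/(i:ℝ)) ^ ((i:ℝ) - 3/2)
          ≤ (((i:ℝ)+1)/(i:ℝ)) ^ ((i:ℝ)) := Real.rpow_le_rpow_of_exponent_le hbase1 (by linarith)
        _ ≤ Real.exp 1 := by
            rw [Real.rpow_def_of_pos (by positivity)]
            apply Real.exp_le_exp.mpr
            have hlog : Real.log (((i:ℝ)+1)/(i:ℝ)) ≤ 1/(i:ℝ) := by
              have := Real.log_le_sub_one_of_pos (x := ((i:ℝ)+1)/(i:ℝ)) (by positivity)
              calc Real.log (((i:ℝ)+1)/(i:ℝ)) ≤ ((i:ℝ)+1)/(i:ℝ) - 1 := this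
                _ = 1/(i:ℝ) := by field_simp; ring
            calc Real.log (((i:ℝ)+1)/(i:ℝ)) * (i:ℝ) ≤ (1/(i:ℝ)) * (i:ℝ) := by
                  exact mul_le_mul_of_nonneg_right hlog hipos.le
              _ = 1 := by field_simp
    have hexpsplit : Real.exp (-(4*((i:ℝ)+1-1))) = Real.exp (-(4*((i:ℝ)-1))) * Real.exp (-4) := by
      rw [← Real.exp_add]; ring_nf
    rw [hQ, hexpsplit]
    have hP : (0:ℝ) < (4*(i:ℝ)) ^ ((i:ℝ) - 3/2) := Real.rpow_pos_of_pos (by positivity) _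
    have hE : (0:ℝ) < Real.exp (-(4*((i:ℝ)-1))) := Real.exp_pos _
    -- core: 2 * (P * R * (4(i+1))) * (E * exp(-4)) ≤ (i-1/2) * Gamma ≥ (i-1/2) * 2 P E
    have hkey : (2:ℝ) * ((4*(i:ℝ)) ^ ((i:ℝ) - 3/2) * (((i:ℝ)+1)/(i:ℝ)) ^ ((i:ℝ) - 3/2) * (4*((i:ℝ)+1)))
        * (Real.exp (-(4*((i:ℝ)-1))) * Real.exp (-4))
        ≤ ((i:ℝ) - 1/2) * (2 * (4*(i:ℝ)) ^ ((i:ℝ) - 3/2) * Real.exp (-(4*((i:ℝ)-1)))) := by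
      have hcoef : (((i:ℝ)+1)/(i:ℝ)) ^ ((i:ℝ) - 3/2) * (4*((i:ℝ)+1)) * Real.exp (-4)
          ≤ ((i:ℝ) - 1/2) := by
        have h1 : (((i:ℝ)+1)/(i:ℝ)) ^ ((i:ℝ) - 3/2) * (4*((i:ℝ)+1)) * Real.exp (-4)
            ≤ Real.exp 1 * (4*((i:ℝ)+1)) * Real.exp (-4) := by
          have hRpos : (0:ℝ) ≤ (((i:ℝ)+1)/(i:ℝ)) ^ ((i:ℝ) - 3/2) := by positivity
          have := mul_le_mul_of_nonneg_right hratio (le_of_lt (by positivity :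
            (0:ℝ) < (4*((i:ℝ)+1)) * Real.exp (-4)))
          calc _ = (((i:ℝ)+1)/(i:ℝ)) ^ ((i:ℝ) - 3/2) * ((4*((i:ℝ)+1)) * Real.exp (-4)) := by ring
            _ ≤ Real.exp 1 * ((4*((i:ℝ)+1)) * Real.exp (-4)) := this
            _ = Real.exp 1 * (4*((i:ℝ)+1)) * Real.exp (-4) := by ring
        have hone : Real.exp 1 * Real.exp (-4) * Real.exp 3 = 1 := by
          rw [← Real.exp_add, ← Real.exp_add]; norm_num
        have h2 : Real.exp 1 * (4*((i:ℝ)+1)) * Real.exp (-4) = (4*((i:ℝ)+1)) / Real.exp 3 := by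
          rw [eq_div_iff (Real.exp_pos 3).ne']
          calc Real.exp 1 * (4*((i:ℝ)+1)) * Real.exp (-4) * Real.exp 3
              = (Real.exp 1 * Real.exp (-4) * Real.exp 3) * (4*((i:ℝ)+1)) := by ring
            _ = 4*((i:ℝ)+1) := by rw [hone]; ring
        have h3 : (4*((i:ℝ)+1)) / Real.exp 3 ≤ (i:ℝ) - 1/2 := by
          rw [div_le_iff₀ (Real.exp_pos 3)]
          have := gg_exp3
          nlinarith [Real.exp_pos 3]
        linarith [h1, h2 ▸ h1]
      calc (2:ℝ) * ((4*(i:ℝ)) ^ ((i:ℝ) - 3/2) * (((i:ℝ)+1)/(i:ℝ)) ^ ((i:ℝ) - 3/2) * (4*((i:ℝ)+1)))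
            * (Real.exp (-(4*((i:ℝ)-1))) * Real.exp (-4))
          = ((((i:ℝ)+1)/(i:ℝ)) ^ ((i:ℝ) - 3/2) * (4*((i:ℝ)+1)) * Real.exp (-4))
            * (2 * (4*(i:ℝ)) ^ ((i:ℝ) - 3/2) * Real.exp (-(4*((i:ℝ)-1)))) := by ring
        _ ≤ ((i:ℝ) - 1/2) * (2 * (4*(i:ℝ)) ^ ((i:ℝ) - 3/2) * Real.exp (-(4*((i:ℝ)-1)))) := by
            apply mul_le_mul_of_nonneg_right hcoef (by positivity)
    calc _ ≤ ((i:ℝ) - 1/2) * (2 * (4*(i:ℝ)) ^ ((i:ℝ) - 3/2) * Real.exp (-(4*((i:ℝ)-1)))) := hkey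
      _ ≤ ((i:ℝ) - 1/2) * Real.Gamma ((i:ℝ) - 1/2) := by
          apply mul_le_mul_of_nonneg_left ih (by linarith)

lemma gg_mono (i : ℕ) (hi : 1 ≤ i) (s : ℝ) (hs : 4 ≤ s) :
    (s*(i:ℝ)) ^ ((i:ℝ)-3/2) * Real.exp (-(((i:ℝ)-1)*s))
      ≤ (4*(i:ℝ)) ^ ((i:ℝ)-3/2) * Real.exp (-(4*((i:ℝ)-1))) := by
  have hi1 : (1:ℝ) ≤ (i:ℝ) := by exact_mod_cast hi
  have hipos : (0:ℝ) < (i:ℝ) := by linarith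
  have hspos : (0:ℝ) < s := by linarith
  set c : ℝ := (i:ℝ) - 3/2 with hc
  have hsplit : (s*(i:ℝ)) ^ c = (4*(i:ℝ)) ^ c * (s/4) ^ c := by
    rw [← Real.mul_rpow (by positivity) (by positivity)]
    congr 1; ring
  have hkey : (s/4) ^ c ≤ Real.exp (((i:ℝ)-1)*(s-4)) := by
    have hbase : (1:ℝ) ≤ s/4 := by linarith
    rcases le_or_gt c 0 with h | h
    · calc (s/4) ^ c ≤ 1 := Real.rpow_le_one_of_one_le_of_nonpos hbase h
        _ ≤ _ := Real.one_le_exp (by nlinarith)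
    · rw [← Real.exp_log (x := (s/4)^c) (Real.rpow_pos_of_pos (by positivity) _),
        Real.log_rpow (by positivity)]
      apply Real.exp_le_exp.mpr
      have hlog : Real.log (s/4) ≤ (s-4)/4 := by
        have := Real.log_le_sub_one_of_pos (x := s/4) (by positivity)
        linarith [this]
      have hc4 : c ≤ 4*((i:ℝ)-1) := by rw [hc]; nlinarith
      calc c * Real.log (s/4) ≤ c * ((s-4)/4) := mul_le_mul_of_nonneg_left hlog h.le
        _ ≤ ((i:ℝ)-1)*(s-4) := by nlinarith
  rw [hsplit]
  have hmerge : Real.exp (((i:ℝ)-1)*(s-4)) * Real.exp (-(((i:ℝ)-1)*s)) = Real.exp (-(4*((i:ℝ)-1))) := by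
    rw [← Real.exp_add]; ring_nf
  calc (4*(i:ℝ)) ^ c * (s/4) ^ c * Real.exp (-(((i:ℝ)-1)*s))
      ≤ (4*(i:ℝ)) ^ c * Real.exp (((i:ℝ)-1)*(s-4)) * Real.exp (-(((i:ℝ)-1)*s)) := by
        have := mul_le_mul_of_nonneg_left hkey (le_of_lt (Real.rpow_pos_of_pos (show (0:ℝ) < 4*(i:ℝ) by positivity) c))
        exact mul_le_mul_of_nonneg_right this (Real.exp_pos _).le
    _ = (4*(i:ℝ)) ^ c * Real.exp (-(4*((i:ℝ)-1))) := by rw [mul_assoc, hmerge]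

theorem genGamma_tail_bound :
    ∃ C : ℝ, 0 < C ∧ ∀ (i : ℕ), 1 ≤ i → ∀ A : ℝ, 8 ≤ A →
      ∀ (Ω : Type) (_ : MeasurableSpace Ω) (P : Measure Ω), IsProbabilityMeasure P →
      ∀ (Z : Ω → ℝ), Measurable Z → P.map Z = genGammaMeasure (2 * (i : ℝ) - 1) 2 →
        P {ω | A ^ ((1 : ℝ) / 3) * Real.sqrt i ≤ Z ω}
          ≤ ENNReal.ofReal (C * Real.exp (-(A ^ ((2 : ℝ) / 3)))) := by
  refine ⟨1, one_pos, ?_⟩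
  intro i hi A hA Ω mΩ P hP Z hZ hmap
  have hi1 : (1:ℝ) ≤ (i:ℝ) := by exact_mod_cast hi
  have hApos : (0:ℝ) < A := by linarith
  set s : ℝ := A ^ ((2:ℝ)/3) with hs
  set t : ℝ := A ^ ((1:ℝ)/3) * Real.sqrt i with htdef
  have hs4 : (4:ℝ) ≤ s := by
    have h8 : (8:ℝ) ^ ((2:ℝ)/3) = 4 := by
      rw [show (8:ℝ) = 2^(3:ℕ) by norm_num, ← Real.rpow_natCast 2 3,
        ← Real.rpow_mul (by norm_num)]
      norm_num
    calc (4:ℝ) = 8 ^ ((2:ℝ)/3) := h8.symm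
      _ ≤ s := by rw [hs]; exact Real.rpow_le_rpow (by norm_num) hA (by norm_num)
  have ht0 : 0 < t := by
    rw [htdef]
    apply mul_pos (Real.rpow_pos_of_pos hApos _)
    exact Real.sqrt_pos.mpr (by positivity)
  have ht2 : t^2 = s * (i:ℝ) := by
    rw [htdef, hs, mul_pow, Real.sq_sqrt (by positivity : (0:ℝ) ≤ (i:ℝ)),
      ← Real.rpow_natCast (A ^ ((1:ℝ)/3)) 2, ← Real.rpow_mul hApos.le]
    norm_num
  have ht2i : 2*(i:ℝ) ≤ t^2 := by rw [ht2]; nlinarith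
  -- Gamma normalization
  have hΓarg : (2*(i:ℝ)-1)/2 = (i:ℝ)-1/2 := by ring
  set Γ0 : ℝ := Real.Gamma ((2*(i:ℝ)-1)/2) with hΓ0def
  have hΓ0 : 0 < Γ0 := Real.Gamma_pos_of_pos (by rw [hΓarg]; linarith)
  set K : ℝ := 2/Γ0 * t^(2*(i:ℝ)-3) * Real.exp (-(t^2/2)) with hK
  have hKnn : 0 ≤ K := by
    rw [hK]
    have := Real.rpow_pos_of_pos ht0 (2*(i:ℝ)-3)
    positivity
  -- measure rewriting
  have hmapA : P {ω | t ≤ Z ω} = genGammaMeasure (2*(i:ℝ)-1) 2 (Set.Ici t) := by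
    rw [show {ω | t ≤ Z ω} = Z ⁻¹' (Set.Ici t) from rfl,
      ← Measure.map_apply hZ measurableSet_Ici, hmap]
  rw [hmapA, genGammaMeasure, withDensity_apply _ measurableSet_Ici]
  -- pointwise bound
  have hbound : ∀ x ∈ Set.Ici t, ENNReal.ofReal (genGammaPDFReal (2*(i:ℝ)-1) 2 x)
      ≤ ENNReal.ofReal (K * (x * Real.exp (-(x^2/2)))) := by
    intro x hx
    have hx0 : 0 < x := lt_of_lt_of_le ht0 hx
    apply ENNReal.ofReal_le_ofReal
    rw [genGammaPDFReal, if_pos hx0]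
    have hx2 : x ^ (2:ℝ) = x^2 := by
      rw [show (2:ℝ) = ((2:ℕ):ℝ) by norm_num, Real.rpow_natCast]
    have hexp : (2:ℝ)*(i:ℝ)-1-1 = 2*(i:ℝ)-2 := by ring
    rw [hx2, hexp, hΓarg]
    calc 2 / Real.Gamma ((i:ℝ)-1/2) * x ^ (2*(i:ℝ)-2) * Real.exp (-x^2)
        = 2/Γ0 * (x ^ (2*(i:ℝ)-2) * Real.exp (-(x^2))) := by
          rw [hΓ0def, hΓarg]; ring_nf
      _ ≤ 2/Γ0 * ((t ^ (2*(i:ℝ)-3) * Real.exp (-(t^2/2))) * (x * Real.exp (-(x^2/2)))) := by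
          apply mul_le_mul_of_nonneg_left (gg_ptwise i t x ht0 ht2i hx) (by positivity)
      _ = K * (x * Real.exp (-(x^2/2))) := by rw [hK]; ring
  -- integrability
  have hint : IntegrableOn (fun x => K * (x * Real.exp (-(x^2/2)))) (Set.Ici t) := by
    rw [integrableOn_Ici_iff_integrableOn_Ioi]
    exact ((gg_int t ht0).2).const_mul K
  have hnn : 0 ≤ᵐ[volume.restrict (Set.Ici t)] fun x => K * (x * Real.exp (-(x^2/2))) := by
    refine (ae_restrict_iff' measurableSet_Ici).mpr (Filter.Eventually.of_forall fun x hx => ?_)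
    have hx0 : 0 < x := lt_of_lt_of_le ht0 hx
    positivity
  -- main calc
  calc ∫⁻ x in Set.Ici t, ENNReal.ofReal (genGammaPDFReal (2*(i:ℝ)-1) 2 x)
      ≤ ∫⁻ x in Set.Ici t, ENNReal.ofReal (K * (x * Real.exp (-(x^2/2)))) :=
        setLIntegral_mono (by fun_prop) hbound
    _ = ENNReal.ofReal (∫ x in Set.Ici t, K * (x * Real.exp (-(x^2/2)))) :=
        (ofReal_integral_eq_lintegral_ofReal hint hnn).symm
    _ = ENNReal.ofReal (K * Real.exp (-(t^2/2))) := by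
        rw [integral_Ici_eq_integral_Ioi, integral_const_mul, (gg_int t ht0).1]
    _ ≤ ENNReal.ofReal (1 * Real.exp (-s)) := by
        apply ENNReal.ofReal_le_ofReal
        -- final real inequality
        have hpow : t ^ (2*(i:ℝ)-3) = (s*(i:ℝ)) ^ ((i:ℝ)-3/2) := by
          rw [← ht2, ← Real.rpow_natCast t 2, ← Real.rpow_mul ht0.le]
          congr 1
          push_cast; ring
        have hkey : 2 * (s*(i:ℝ)) ^ ((i:ℝ)-3/2) * Real.exp (-(((i:ℝ)-1)*s)) ≤ Γ0 := by
          rw [hΓ0def, hΓarg]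
          calc 2 * (s*(i:ℝ)) ^ ((i:ℝ)-3/2) * Real.exp (-(((i:ℝ)-1)*s))
              = 2 * ((s*(i:ℝ)) ^ ((i:ℝ)-3/2) * Real.exp (-(((i:ℝ)-1)*s))) := by ring
            _ ≤ 2 * ((4*(i:ℝ)) ^ ((i:ℝ)-3/2) * Real.exp (-(4*((i:ℝ)-1)))) := by
                apply mul_le_mul_of_nonneg_left (gg_mono i hi s hs4) (by norm_num)
            _ = 2 * (4*(i:ℝ)) ^ ((i:ℝ)-3/2) * Real.exp (-(4*((i:ℝ)-1))) := by ring
            _ ≤ Real.Gamma ((i:ℝ)-1/2) := gg_ind i hi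
        have hKe : K * Real.exp (-(t^2/2)) = 2/Γ0 * (s*(i:ℝ)) ^ ((i:ℝ)-3/2) * Real.exp (-(s*(i:ℝ))) := by
          rw [hK, hpow, mul_assoc, ← Real.exp_add, ← ht2]
          ring_nf
        rw [hKe, one_mul]
        rw [div_mul_eq_mul_div, div_mul_eq_mul_div, div_le_iff₀ hΓ0]
        have hsplit : Real.exp (-(s*(i:ℝ))) = Real.exp (-(((i:ℝ)-1)*s)) * Real.exp (-s) := by
          rw [← Real.exp_add]; ring_nf
        calc 2 * (s*(i:ℝ)) ^ ((i:ℝ)-3/2) * Real.exp (-(s*(i:ℝ)))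
            = (2 * (s*(i:ℝ)) ^ ((i:ℝ)-3/2) * Real.exp (-(((i:ℝ)-1)*s))) * Real.exp (-s) := by
              rw [hsplit]; ring
          _ ≤ Γ0 * Real.exp (-s) := mul_le_mul_of_nonneg_right hkey (Real.exp_pos _).le
          _ = Real.exp (-s) * Γ0 := by ring
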